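/- In the sequent calculus S4Vg (with the □-rules of S4, the V-rule □Θ,Γ⇒X / □Θ,VΓ⇒VX, the interaction rule Γ,VX⇒Δ / Γ,□X⇒Δ, and the weak inconsistency elimination rule Γ⇒□V⊥ / Γ⇒), every derivable sequent Γ⇒Δ corresponds to a Hilbert-style S4V theorem ⋀Γ→⋁Δ (soundness of the sequent system with respect to S4V). -/

import Mathlib

/-- Formulas of intuitionistic epistemic logic. -/
inductive IForm : Type
  | atom : ℕ → IForm
  | bot  : IForm
  | and  : IForm → IForm → IForm
  | or   : IForm → IForm → IForm
  | imp  : IForm → IForm → IForm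
  | K    : IForm → IForm

def IForm.neg (A : IForm) : IForm := A.imp .bot

/-- Hilbert-style derivability for IEL⁻ together with an extra axiom set `Ax`. -/
inductive IELDeriv (Ax : IForm → Prop) : IForm → Prop
  | extra {A : IForm} : Ax A → IELDeriv Ax A
  | a1 (A B : IForm) : IELDeriv Ax (A.imp (B.imp A))
  | a2 (A B C : IForm) : IELDeriv Ax ((A.imp (B.imp C)).imp ((A.imp B).imp (A.imp C)))
  | andI (A B : IForm) : IELDeriv Ax (A.imp (B.imp (A.and B)))
  | andE1 (A B : IForm) : IELDeriv Ax ((A.and B).imp A)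
  | andE2 (A B : IForm) : IELDeriv Ax ((A.and B).imp B)
  | orI1 (A B : IForm) : IELDeriv Ax (A.imp (A.or B))
  | orI2 (A B : IForm) : IELDeriv Ax (B.imp (A.or B))
  | orE (A B C : IForm) : IELDeriv Ax ((A.imp C).imp ((B.imp C).imp ((A.or B).imp C)))
  | exfalso (A : IForm) : IELDeriv Ax (IForm.bot.imp A)
  | kdist (A B : IForm) : IELDeriv Ax ((IForm.K (A.imp B)).imp ((IForm.K A).imp (IForm.K B)))
  | coref (A : IForm) : IELDeriv Ax (A.imp (IForm.K A))
  | mp {A B : IForm} : IELDeriv Ax (A.imp B) → IELDeriv Ax A → IELDeriv Ax B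

/-- Derivability in IEL⁻. -/
def IELm : IForm → Prop := IELDeriv (fun _ => False)

/-- Derivability in IEL: IEL⁻ plus the axiom schema KA → ¬¬A. -/
def IEL : IForm → Prop :=
  IELDeriv (fun F => ∃ A : IForm, F = (IForm.K A).imp A.neg.neg)


/-- Formulas of classical bimodal logic with □ (provability) and V (verification). -/
inductive MForm : Type
  | atom : ℕ → MForm
  | bot  : MForm
  | and  : MForm → MForm → MForm
  | or   : MForm → MForm → MForm
  | imp  : MForm → MForm → MForm
  | box  : MForm → MForm
  | V    : MForm → MForm

def MForm.neg (A : MForm) : MForm := A.imp .bot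

/-- Hilbert-style derivability for S4V⁻ (`strong = false`) and S4V (`strong = true`,
adding the axiom ¬□V⊥). -/
inductive S4VDeriv (strong : Bool) : MForm → Prop
  | a1 (A B : MForm) : S4VDeriv strong (A.imp (B.imp A))
  | a2 (A B C : MForm) : S4VDeriv strong ((A.imp (B.imp C)).imp ((A.imp B).imp (A.imp C)))
  | andI (A B : MForm) : S4VDeriv strong (A.imp (B.imp (A.and B)))
  | andE1 (A B : MForm) : S4VDeriv strong ((A.and B).imp A)
  | andE2 (A B : MForm) : S4VDeriv strong ((A.and B).imp B)
  | orI1 (A B : MForm) : S4VDeriv strong (A.imp (A.or B))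
  | orI2 (A B : MForm) : S4VDeriv strong (B.imp (A.or B))
  | orE (A B C : MForm) : S4VDeriv strong ((A.imp C).imp ((B.imp C).imp ((A.or B).imp C)))
  | exfalso (A : MForm) : S4VDeriv strong (MForm.bot.imp A)
  | dne (A : MForm) : S4VDeriv strong (A.neg.neg.imp A)
  | boxK (A B : MForm) : S4VDeriv strong ((A.imp B).box.imp (A.box.imp B.box))
  | boxT (A : MForm) : S4VDeriv strong (A.box.imp A)
  | box4 (A : MForm) : S4VDeriv strong (A.box.imp A.box.box)
  | vK (A B : MForm) : S4VDeriv strong ((MForm.V (A.imp B)).imp ((MForm.V A).imp (MForm.V B)))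
  | boxV (A : MForm) : S4VDeriv strong (A.box.imp (MForm.V A))
  | consis : strong = true → S4VDeriv strong ((MForm.V MForm.bot).box.neg)
  | mp {A B : MForm} : S4VDeriv strong (A.imp B) → S4VDeriv strong A → S4VDeriv strong B
  | nec {A : MForm} : S4VDeriv strong A → S4VDeriv strong A.box


/-- The sequent calculus S4Vg: G1c with the modal rules of S4, the V-rule,
the interaction rule, and weak inconsistency elimination. -/
inductive SDeriv : List MForm → List MForm → Prop
  | ax (n : ℕ) : SDeriv [MForm.atom n] [MForm.atom n]
  | botL : SDeriv [MForm.bot] []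
  | perm {Γ Γ' Δ Δ' : List MForm} : Γ.Perm Γ' → Δ.Perm Δ' → SDeriv Γ Δ → SDeriv Γ' Δ'
  | wkL {Γ Δ : List MForm} (A : MForm) : SDeriv Γ Δ → SDeriv (A :: Γ) Δ
  | wkR {Γ Δ : List MForm} (A : MForm) : SDeriv Γ Δ → SDeriv Γ (A :: Δ)
  | ctrL {Γ Δ : List MForm} {A : MForm} : SDeriv (A :: A :: Γ) Δ → SDeriv (A :: Γ) Δ
  | ctrR {Γ Δ : List MForm} {A : MForm} : SDeriv Γ (A :: A :: Δ) → SDeriv Γ (A :: Δ)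
  | andL1 {Γ Δ : List MForm} {A : MForm} (B : MForm) :
      SDeriv (A :: Γ) Δ → SDeriv (A.and B :: Γ) Δ
  | andL2 {Γ Δ : List MForm} (A : MForm) {B : MForm} :
      SDeriv (B :: Γ) Δ → SDeriv (A.and B :: Γ) Δ
  | andR {Γ Δ : List MForm} {A B : MForm} :
      SDeriv Γ (A :: Δ) → SDeriv Γ (B :: Δ) → SDeriv Γ (A.and B :: Δ)
  | orL {Γ Δ : List MForm} {A B : MForm} :
      SDeriv (A :: Γ) Δ → SDeriv (B :: Γ) Δ → SDeriv (A.or B :: Γ) Δ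
  | orR1 {Γ Δ : List MForm} {A : MForm} (B : MForm) :
      SDeriv Γ (A :: Δ) → SDeriv Γ (A.or B :: Δ)
  | orR2 {Γ Δ : List MForm} (A : MForm) {B : MForm} :
      SDeriv Γ (B :: Δ) → SDeriv Γ (A.or B :: Δ)
  | impL {Γ Δ : List MForm} {A B : MForm} :
      SDeriv Γ (A :: Δ) → SDeriv (B :: Γ) Δ → SDeriv (A.imp B :: Γ) Δ
  | impR {Γ Δ : List MForm} {A B : MForm} :
      SDeriv (A :: Γ) (B :: Δ) → SDeriv Γ (A.imp B :: Δ)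
  | boxL {Γ Δ : List MForm} {A : MForm} : SDeriv (A :: Γ) Δ → SDeriv (A.box :: Γ) Δ
  | boxR {Γ : List MForm} {A : MForm} :
      SDeriv (Γ.map MForm.box) [A] → SDeriv (Γ.map MForm.box) [A.box]
  | vR {Θ Γ : List MForm} {A : MForm} :
      SDeriv (Θ.map MForm.box ++ Γ) [A] →
      SDeriv (Θ.map MForm.box ++ Γ.map MForm.V) [MForm.V A]
  | interL {Γ Δ : List MForm} {A : MForm} :
      SDeriv (MForm.V A :: Γ) Δ → SDeriv (A.box :: Γ) Δ
  | wie {Γ : List MForm} : SDeriv Γ [(MForm.V MForm.bot).box] → SDeriv Γ []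

/-- Conjunction of a list of formulas (empty list: ⊤ = ⊥→⊥). -/
def mconj (Γ : List MForm) : MForm := Γ.foldr MForm.and (MForm.bot.imp MForm.bot)

/-- Disjunction of a list of formulas (empty list: ⊥). -/
def mdisj (Δ : List MForm) : MForm := Δ.foldr MForm.or MForm.bot

namespace S4VSound

abbrev P (A : MForm) : Prop := S4VDeriv true A

theorem imp_refl (A : MForm) : P (A.imp A) :=
  S4VDeriv.mp (S4VDeriv.mp (S4VDeriv.a2 A (A.imp A) A) (S4VDeriv.a1 A (A.imp A)))
    (S4VDeriv.a1 A A)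

/-- Derivation from hypotheses (no nec under hypotheses). -/
inductive HD (Γ : List MForm) : MForm → Prop
  | hyp {A : MForm} : A ∈ Γ → HD Γ A
  | thm {A : MForm} : P A → HD Γ A
  | mp {A B : MForm} : HD Γ (A.imp B) → HD Γ A → HD Γ B

theorem HD.mono {Γ Γ' : List MForm} {A : MForm} (hs : ∀ B ∈ Γ, B ∈ Γ')
    (h : HD Γ A) : HD Γ' A := by
  induction h with
  | hyp h => exact HD.hyp (hs _ h)
  | thm h => exact HD.thm h
  | mp _ _ ih1 ih2 => exact HD.mp ih1 ih2

theorem HD.wk {Γ : List MForm} {A B : MForm} (h : HD Γ A) : HD (B :: Γ) A :=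
  h.mono (fun _ hB => List.mem_cons_of_mem _ hB)

theorem HD.hyp0 {Γ : List MForm} {A : MForm} : HD (A :: Γ) A :=
  HD.hyp (List.mem_cons_self)

theorem HD.ded {Γ : List MForm} {A B : MForm} (h : HD (B :: Γ) A) :
    HD Γ (B.imp A) := by
  induction h with
  | hyp h =>
    rcases List.mem_cons.1 h with h | h
    · subst h; exact HD.thm (imp_refl _)
    · exact HD.mp (HD.thm (S4VDeriv.a1 _ _)) (HD.hyp h)
  | thm h => exact HD.mp (HD.thm (S4VDeriv.a1 _ _)) (HD.thm h)
  | mp _ _ ih1 ih2 => exact HD.mp (HD.mp (HD.thm (S4VDeriv.a2 _ _ _)) ih1) ih2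

theorem HD.unded {Γ : List MForm} {A B : MForm} (h : HD Γ (B.imp A)) :
    HD (B :: Γ) A := HD.mp h.wk HD.hyp0

theorem HD.close {A : MForm} (h : HD [] A) : P A := by
  induction h with
  | hyp h => cases h
  | thm h => exact h
  | mp _ _ ih1 ih2 => exact S4VDeriv.mp ih1 ih2

theorem HD.cut {Γ : List MForm} {A C : MForm} (h1 : HD (A :: Γ) C)
    (h2 : HD Γ A) : HD Γ C := HD.mp h1.ded h2

theorem HD.orCases {Γ : List MForm} {A B C : MForm} (h : HD Γ (A.or B))
    (h1 : HD (A :: Γ) C) (h2 : HD (B :: Γ) C) : HD Γ C :=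
  HD.mp (HD.mp (HD.mp (HD.thm (S4VDeriv.orE A B C)) h1.ded) h2.ded) h

theorem imp_trans {A B C : MForm} (h1 : P (A.imp B)) (h2 : P (B.imp C)) :
    P (A.imp C) :=
  (HD.ded (HD.mp (HD.thm h2) (HD.mp (HD.thm h1) HD.hyp0))).close

theorem em (A : MForm) : P (A.or A.neg) := by
  have key : HD [] ((A.or A.neg).neg.imp MForm.bot) := by
    apply HD.ded
    have hne : HD [(A.or A.neg).neg] A.neg := by
      apply HD.ded
      exact HD.mp (HD.hyp (List.mem_cons_of_mem _ (List.mem_cons_self)))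
        (HD.mp (HD.thm (S4VDeriv.orI1 A A.neg)) HD.hyp0)
    exact HD.mp HD.hyp0 (HD.mp (HD.thm (S4VDeriv.orI2 A A.neg)) hne)
  exact S4VDeriv.mp (S4VDeriv.dne _) key.close

theorem nec_imp {A B : MForm} (h : P (A.imp B)) : P (A.box.imp B.box) :=
  S4VDeriv.mp (S4VDeriv.boxK A B) (S4VDeriv.nec h)

theorem v_thm {A : MForm} (h : P A) : P (MForm.V A) :=
  S4VDeriv.mp (S4VDeriv.boxV A) (S4VDeriv.nec h)

theorem v_imp {A B : MForm} (h : P (A.imp B)) : P ((MForm.V A).imp (MForm.V B)) :=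
  S4VDeriv.mp (S4VDeriv.vK A B) (v_thm h)

/-- □A → □B → □(A∧B), curried theorem form. -/
theorem pair_box (A B : MForm) : P (A.box.imp (B.box.imp ((A.and B).box))) :=
  imp_trans (nec_imp (S4VDeriv.andI A B)) (S4VDeriv.boxK B (A.and B))

theorem pair_v (A B : MForm) :
    P ((MForm.V A).imp ((MForm.V B).imp (MForm.V (A.and B)))) :=
  imp_trans (v_imp (S4VDeriv.andI A B)) (S4VDeriv.vK B (A.and B))

theorem mdisj_cons (A : MForm) (Δ : List MForm) : mdisj (A :: Δ) = A.or (mdisj Δ) := rfl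
theorem mconj_cons (A : MForm) (Γ : List MForm) : mconj (A :: Γ) = A.and (mconj Γ) := rfl

theorem mem_disj {A : MForm} {Δ : List MForm} (h : A ∈ Δ) : P (A.imp (mdisj Δ)) := by
  induction Δ with
  | nil => cases h
  | cons B Δ ih =>
    rcases List.mem_cons.1 h with h | h
    · exact h ▸ S4VDeriv.orI1 _ _
    · exact imp_trans (ih h) (S4VDeriv.orI2 _ _)

theorem disj_elim {C : MForm} {Δ : List MForm} (h : ∀ A ∈ Δ, P (A.imp C)) :
    P ((mdisj Δ).imp C) := by
  induction Δ with
  | nil => exact S4VDeriv.exfalso C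
  | cons B Δ ih =>
    exact S4VDeriv.mp (S4VDeriv.mp (S4VDeriv.orE B (mdisj Δ) C) (h B (by simp)))
      (ih fun A hA => h A (by simp [hA]))

theorem mem_conj {A : MForm} {Γ : List MForm} (h : A ∈ Γ) : P ((mconj Γ).imp A) := by
  induction Γ with
  | nil => cases h
  | cons B Γ ih =>
    rcases List.mem_cons.1 h with h | h
    · exact h ▸ S4VDeriv.andE1 _ _
    · exact imp_trans (S4VDeriv.andE2 _ _) (ih h)

theorem conj_intro {C : MForm} {L : List MForm} (h : ∀ A ∈ L, P (C.imp A)) :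
    P (C.imp (mconj L)) := by
  induction L with
  | nil => exact S4VDeriv.mp (S4VDeriv.a1 _ _) (imp_refl MForm.bot)
  | cons B L ih =>
    have h1 : P (C.imp (mconj L)) := ih fun A hA => h A (by simp [hA])
    have h2 : P (C.imp ((mconj L).imp (B.and (mconj L)))) :=
      imp_trans (h B (by simp)) (S4VDeriv.andI B (mconj L))
    exact S4VDeriv.mp (S4VDeriv.mp (S4VDeriv.a2 _ _ _) h2) h1

theorem conj_subset {Γ L : List MForm} (h : ∀ A ∈ L, A ∈ Γ) : HD Γ (mconj L) := by
  induction L with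
  | nil => exact HD.thm (imp_refl _)
  | cons B L ih =>
    exact HD.mp
      (HD.mp (HD.thm (S4VDeriv.andI B (mconj L))) (HD.hyp (h B (by simp))))
      (ih fun A hA => h A (by simp [hA]))

theorem self_conj (Γ : List MForm) : HD Γ (mconj Γ) := conj_subset (fun _ h => h)

theorem hd_to_imp {Γ : List MForm} {A : MForm} (h : HD Γ A) : P ((mconj Γ).imp A) := by
  induction h with
  | hyp h => exact mem_conj h
  | thm h => exact S4VDeriv.mp (S4VDeriv.a1 _ _) h
  | mp _ _ ih1 ih2 => exact S4VDeriv.mp (S4VDeriv.mp (S4VDeriv.a2 _ _ _) ih1) ih2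

theorem imp_to_hd {Γ : List MForm} {A : MForm} (h : P ((mconj Γ).imp A)) : HD Γ A :=
  HD.mp (HD.thm h) (self_conj Γ)

theorem conj_append {L1 L2 : List MForm} :
    P (((mconj L1).and (mconj L2)).imp (mconj (L1 ++ L2))) := by
  apply conj_intro
  intro A hA
  rcases List.mem_append.1 hA with h | h
  · exact imp_trans (S4VDeriv.andE1 _ _) (mem_conj h)
  · exact imp_trans (S4VDeriv.andE2 _ _) (mem_conj h)

/-- conjunction of boxes implies its own box -/
theorem box_conj (Γ : List MForm) :
    P ((mconj (Γ.map MForm.box)).imp (mconj (Γ.map MForm.box)).box) := by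
  induction Γ with
  | nil =>
    exact S4VDeriv.mp (S4VDeriv.a1 _ _) (S4VDeriv.nec (imp_refl MForm.bot))
  | cons A Γ ih =>
    rw [List.map_cons, mconj_cons]
    apply HD.close; apply HD.ded
    set C := mconj (Γ.map MForm.box) with hC
    have hA : HD [A.box.and C] A.box.box :=
      HD.mp (HD.thm (imp_trans (S4VDeriv.andE1 A.box C) (S4VDeriv.box4 A))) HD.hyp0
    have hB : HD [A.box.and C] C.box :=
      HD.mp (HD.thm (imp_trans (S4VDeriv.andE2 A.box C) ih)) HD.hyp0
    exact HD.mp (HD.mp (HD.thm (pair_box A.box C)) hA) hB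

theorem v_conj (Γ : List MForm) :
    P ((mconj (Γ.map MForm.V)).imp (MForm.V (mconj Γ))) := by
  induction Γ with
  | nil => exact S4VDeriv.mp (S4VDeriv.a1 _ _) (v_thm (imp_refl MForm.bot))
  | cons A Γ ih =>
    rw [List.map_cons, mconj_cons, mconj_cons]
    apply HD.close; apply HD.ded
    have hA : HD [(MForm.V A).and (mconj (Γ.map MForm.V))] (MForm.V A) :=
      HD.mp (HD.thm (S4VDeriv.andE1 _ _)) HD.hyp0
    have hB : HD [(MForm.V A).and (mconj (Γ.map MForm.V))] (MForm.V (mconj Γ)) :=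
      HD.mp (HD.thm (imp_trans (S4VDeriv.andE2 _ _) ih)) HD.hyp0
    exact HD.mp (HD.mp (HD.thm (pair_v A (mconj Γ))) hA) hB

end S4VSound
namespace S4VSound

theorem main {Γ Δ : List MForm} (h : SDeriv Γ Δ) : HD Γ (mdisj Δ) := by
  induction h with
  | ax n => exact HD.mp (HD.thm (S4VDeriv.orI1 _ _)) HD.hyp0
  | botL => exact HD.hyp0
  | perm hΓ hΔ _ ih =>
    refine HD.mp (HD.thm (disj_elim fun A hA => mem_disj (hΔ.mem_iff.1 hA))) ?_
    exact ih.mono fun B hB => hΓ.mem_iff.1 hB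
  | wkL A _ ih => exact ih.wk
  | wkR A _ ih => exact HD.mp (HD.thm (S4VDeriv.orI2 _ _)) ih
  | ctrL _ ih => exact ih.mono (by intro B hB; simp at hB ⊢; tauto)
  | ctrR _ ih =>
    exact ih.orCases (HD.mp (HD.thm (S4VDeriv.orI1 _ _)) HD.hyp0) HD.hyp0
  | andL1 B _ ih =>
    exact HD.cut (ih.mono (by intro X hX; simp at hX ⊢; tauto))
      (HD.mp (HD.thm (S4VDeriv.andE1 _ _)) HD.hyp0)
  | andL2 A _ ih =>
    exact HD.cut (ih.mono (by intro X hX; simp at hX ⊢; tauto))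
      (HD.mp (HD.thm (S4VDeriv.andE2 _ _)) HD.hyp0)
  | andR _ _ ih1 ih2 =>
    refine ih1.orCases ?_ (HD.mp (HD.thm (S4VDeriv.orI2 _ _)) HD.hyp0)
    refine (ih2.wk).orCases ?_ (HD.mp (HD.thm (S4VDeriv.orI2 _ _)) HD.hyp0)
    refine HD.mp (HD.thm (S4VDeriv.orI1 _ _)) ?_
    exact HD.mp (HD.mp (HD.thm (S4VDeriv.andI _ _))
      (HD.hyp (List.mem_cons_of_mem _ (List.mem_cons_self)))) HD.hyp0
  | orL _ _ ih1 ih2 =>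
    refine HD.orCases HD.hyp0 ?_ ?_
    · exact ih1.mono (by intro X hX; simp at hX ⊢; tauto)
    · exact ih2.mono (by intro X hX; simp at hX ⊢; tauto)
  | orR1 B _ ih =>
    refine ih.orCases ?_ (HD.mp (HD.thm (S4VDeriv.orI2 _ _)) HD.hyp0)
    exact HD.mp (HD.thm (S4VDeriv.orI1 _ _)) (HD.mp (HD.thm (S4VDeriv.orI1 _ _)) HD.hyp0)
  | orR2 A _ ih =>
    refine ih.orCases ?_ (HD.mp (HD.thm (S4VDeriv.orI2 _ _)) HD.hyp0)
    exact HD.mp (HD.thm (S4VDeriv.orI1 _ _)) (HD.mp (HD.thm (S4VDeriv.orI2 _ _)) HD.hyp0)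
  | @impL Γ Δ A B _ _ ih1 ih2 =>
    refine (ih1.wk).orCases ?_ HD.hyp0
    have hB : HD (A :: A.imp B :: Γ) B :=
      HD.mp (HD.hyp (List.mem_cons_of_mem _ (List.mem_cons_self))) HD.hyp0
    exact HD.cut (ih2.mono (by intro X hX; simp at hX ⊢; tauto)) hB
  | @impR Γ Δ A B _ ih =>
    refine (HD.thm (em A)).orCases ?_ ?_
    · refine ih.orCases ?_ (HD.mp (HD.thm (S4VDeriv.orI2 _ _)) HD.hyp0)
      exact HD.mp (HD.thm (S4VDeriv.orI1 _ _)) (HD.mp (HD.thm (S4VDeriv.a1 B A)) HD.hyp0)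
    · refine HD.mp (HD.thm (S4VDeriv.orI1 _ _)) ?_
      refine HD.ded ?_
      exact HD.mp (HD.thm (S4VDeriv.exfalso B))
        (HD.mp (HD.hyp (List.mem_cons_of_mem _ (List.mem_cons_self))) HD.hyp0)
  | @boxL Γ Δ A _ ih =>
    exact HD.cut (ih.mono (by intro X hX; simp at hX ⊢; tauto))
      (HD.mp (HD.thm (S4VDeriv.boxT A)) HD.hyp0)
  | @boxR Γ A _ ih =>
    have hA : HD (Γ.map MForm.box) A :=
      ih.orCases HD.hyp0 (HD.mp (HD.thm (S4VDeriv.exfalso A)) HD.hyp0)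
    have p : P ((mconj (Γ.map MForm.box)).imp A.box) :=
      imp_trans (box_conj Γ) (nec_imp (hd_to_imp hA))
    exact HD.mp (HD.thm (S4VDeriv.orI1 _ _)) (imp_to_hd p)
  | @vR Θ Γ A _ ih =>
    have hA : HD (Θ.map MForm.box ++ Γ) A :=
      ih.orCases HD.hyp0 (HD.mp (HD.thm (S4VDeriv.exfalso A)) HD.hyp0)
    have q : P ((((mconj (Θ.map MForm.box)).and (mconj Γ))).imp A) :=
      imp_trans conj_append (hd_to_imp hA)
    have qV := v_imp q
    set Γ' := Θ.map MForm.box ++ Γ.map MForm.V with hΓ'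
    have hTb : HD Γ' (mconj (Θ.map MForm.box)) :=
      conj_subset (fun X hX => List.mem_append.2 (Or.inl hX))
    have hTbV : HD Γ' (MForm.V (mconj (Θ.map MForm.box))) :=
      HD.mp (HD.thm (imp_trans (box_conj Θ) (S4VDeriv.boxV _))) hTb
    have hGV : HD Γ' (mconj (Γ.map MForm.V)) :=
      conj_subset (fun X hX => List.mem_append.2 (Or.inr hX))
    have hVG : HD Γ' (MForm.V (mconj Γ)) := HD.mp (HD.thm (v_conj Γ)) hGV
    have hpair : HD Γ' (MForm.V ((mconj (Θ.map MForm.box)).and (mconj Γ))) :=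
      HD.mp (HD.mp (HD.thm (pair_v _ _)) hTbV) hVG
    exact HD.mp (HD.thm (S4VDeriv.orI1 _ _)) (HD.mp (HD.thm qV) hpair)
  | @interL Γ Δ A _ ih =>
    exact HD.cut (ih.mono (by intro X hX; simp at hX ⊢; tauto))
      (HD.mp (HD.thm (S4VDeriv.boxV A)) HD.hyp0)
  | wie _ ih =>
    exact ih.orCases (HD.mp (HD.thm (S4VDeriv.consis rfl)) HD.hyp0) HD.hyp0

end S4VSound
/-- Soundness of the sequent calculus S4Vg with respect to the
Hilbert system S4V: every derivable sequent Γ ⇒ Δ yields an S4V theorem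
⋀Γ → ⋁Δ. -/
theorem s4vg_soundness (Γ Δ : List MForm) (h : SDeriv Γ Δ) :
    S4VDeriv true ((mconj Γ).imp (mdisj Δ)) := by
  exact S4VSound.hd_to_imp (S4VSound.main h)
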